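/- Let M be an unstable module, k ≥ 1 an integer, and suppose there is a short exact sequence 0 → K → M → N → 0 of unstable modules with K ∈ Nil_k. Then for every s < k the natural map R_s(M) → R_s(N) is an isomorphism. -/

import Mathlib

/-- An *unstable module* over the mod-2 Steenrod algebra, presented by its graded
pieces, the Steenrod square operations `Sq^i : M^n → M^{n+i}`, and the
instability condition `Sq^i x = 0` for `i > deg x`. -/
structure USM where
  M : ℕ → Type
  inst : ∀ n, AddCommGroup (M n)
  sq : ∀ (i n : ℕ), M n → M (n + i)
  sq_add : ∀ i n (x y : M n), sq i n (x + y) = sq i n x + sq i n y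
  sq_zero : ∀ i n, sq i n (0 : M n) = 0
  sq0_id : ∀ n (x : M n), sq 0 n x = x
  instab : ∀ i n (x : M n), n < i → sq i n x = 0
  char2 : ∀ n (x : M n), x + x = 0

attribute [instance] USM.inst

namespace USM

variable (A : USM)

/-- Degree-cast. -/
def castM {m n : ℕ} (h : m = n) (x : A.M m) : A.M n := h ▸ x

/-- The (homogeneous) elements of `A`, together with their degree. -/
def El := Σ n, A.M n

/-- `Sq^i` on elements. -/
def sqEl (i : ℕ) (x : A.El) : A.El := ⟨x.1 + i, A.sq i x.1 x.2⟩

/-- The lower-indexed operation `Sq_k x = Sq^{|x|-k} x` (zero when `k > |x|`). -/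
def sqLow (k : ℕ) (x : A.El) : A.El :=
  if k ≤ x.1 then ⟨x.1 + (x.1 - k), A.sq (x.1 - k) x.1 x.2⟩ else ⟨x.1, 0⟩

/-- An element is zero. -/
def IsZeroEl (x : A.El) : Prop := x.2 = 0

/-- `x` lies in the largest `s`-nilpotent submodule `M_s` of `M`: every
iterated operation `(Sq_k)^c`, `k < s`, eventually vanishes on `x`
(Proposition 1.4 of the paper, originally the definition of nilpotency in [6]). -/
def NilElem (s : ℕ) (x : A.El) : Prop :=
  ∀ k < s, ∃ c : ℕ, A.IsZeroEl ((A.sqLow k)^[c] x)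

/-- `A` belongs to `Nil_s`: it is (at least) `s`-nilpotent. -/
def IsNil (s : ℕ) : Prop := ∀ x : A.El, A.NilElem s x

/-- `A` is reduced: it contains no nontrivial suspension, equivalently
`Sq₀ = (x ↦ Sq^{|x|} x)` is injective. -/
def Reduced : Prop := ∀ n (x : A.M n), A.sq n n x = 0 → x = 0

/-- Applying a composite Steenrod operation `Sq^{i₁} Sq^{i₂} ⋯` to an element. -/
def applyList : List ℕ → A.El → A.El
  | [], x => x
  | i :: L, x => A.sqEl i (applyList L x)

/-- `A` is *locally finite*: every element generates a finite submodule over the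
Steenrod algebra; equivalently (the Steenrod algebra being finite in each degree)
for every `x` all composite Steenrod operations of sufficiently large total
degree vanish on `x`. -/
def LocFinite : Prop :=
  ∀ x : A.El, ∃ N : ℕ, ∀ L : List ℕ, N ≤ L.sum → A.IsZeroEl (A.applyList L x)

end USM

/-- A morphism of unstable modules. -/
structure USMHom (A B : USM) where
  f : ∀ n, A.M n → B.M n
  map_add : ∀ n (x y : A.M n), f n (x + y) = f n x + f n y
  map_sq : ∀ i n (x : A.M n), f (n + i) (A.sq i n x) = B.sq i n (f n x)

/-- The Adem relations hold in `A` (for `0 < a < 2b`):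
`Sq^a Sq^b = Σ_{i≤a/2} C(b-1-i, a-2i) Sq^{a+b-i} Sq^i` modulo 2. -/
def USM.AdemHolds (A : USM) : Prop :=
  ∀ (a b n : ℕ) (x : A.M n), 0 < a → a < 2 * b →
    A.sq a (n + b) (A.sq b n x) =
      ∑ i ∈ (Finset.range (a / 2 + 1)).attach,
        if Nat.choose (b - 1 - i.1) (a - 2 * i.1) % 2 = 1 then
          A.castM (by have := Finset.mem_range.mp i.2; omega)
            (A.sq (a + b - i.1) (n + i.1) (A.sq i.1 n x))
        else 0

namespace USMHom

variable {A B : USM} (φ : USMHom A B)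

/-- The action of a morphism on homogeneous elements. -/
def el (x : A.El) : B.El := ⟨x.1, φ.f x.1 x.2⟩

lemma map_zero (n : ℕ) : φ.f n (0 : A.M n) = 0 := by
  have h := φ.map_add n 0 0
  rw [add_zero] at h
  exact (left_eq_add.mp h)

lemma el_sqLow (j : ℕ) (x : A.El) : φ.el (A.sqLow j x) = B.sqLow j (φ.el x) := by
  obtain ⟨n, x⟩ := x
  show φ.el (A.sqLow j ⟨n, x⟩) = B.sqLow j ⟨n, φ.f n x⟩
  unfold USM.sqLow
  by_cases h : j ≤ n
  · simp only [h, ↓reduceIte]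
    show (⟨n + (n - j), φ.f (n + (n - j)) (A.sq (n - j) n x)⟩ : B.El) = _
    rw [φ.map_sq]
  · simp only [h, ↓reduceIte]
    show (⟨n, φ.f n 0⟩ : B.El) = _
    rw [φ.map_zero]

lemma el_sqLow_iter (j c : ℕ) (x : A.El) :
    φ.el ((A.sqLow j)^[c] x) = (B.sqLow j)^[c] (φ.el x) := by
  induction c with
  | zero => rfl
  | succ c ih =>
      rw [Function.iterate_succ_apply', Function.iterate_succ_apply',
        φ.el_sqLow, ih]

lemma el_zero {x : A.El} (h : A.IsZeroEl x) : B.IsZeroEl (φ.el x) := by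
  unfold USM.IsZeroEl at h ⊢
  show φ.f x.1 x.2 = 0
  rw [h, φ.map_zero]

end USMHom

/-- Proposition 1.8.  Given a short exact sequence
`0 → K → M → N → 0` of unstable modules with `K ∈ Nil_k` (`k ≥ 1`),
for every `s < k` the natural map `R_s(M) → R_s(N)` is an isomorphism;
i.e. the induced map `M_s/M_{s+1} → N_s/N_{s+1}` is injective and surjective. -/
theorem Rs_iso_of_nilpotent_kernel (K M N : USM) (k : ℕ) (hk : 1 ≤ k)
    (g : USMHom K M) (f : USMHom M N)
    (hg_inj : ∀ n (w : K.M n), g.f n w = 0 → w = 0)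
    (hf_surj : ∀ n (y : N.M n), ∃ x : M.M n, f.f n x = y)
    (hexact : ∀ n (x : M.M n), f.f n x = 0 ↔ ∃ w : K.M n, g.f n w = x)
    (hK : K.IsNil k) :
    ∀ s < k,
      (∀ n (x : M.M n), M.NilElem s ⟨n, x⟩ →
        N.NilElem (s + 1) ⟨n, f.f n x⟩ → M.NilElem (s + 1) ⟨n, x⟩) ∧
      (∀ n (y : N.M n), N.NilElem s ⟨n, y⟩ →
        ∃ x : M.M n, M.NilElem s ⟨n, x⟩ ∧ N.NilElem (s + 1) ⟨n, f.f n x - y⟩) := by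
  intro s hs
  -- Key lemma: if the image of `e` in `N` is eventually killed by `Sq_j`
  -- (for `j < k`), then `e` itself is eventually killed by `Sq_j`.
  have key : ∀ (j : ℕ), j < k → ∀ (e : M.El) (c : ℕ),
      N.IsZeroEl ((N.sqLow j)^[c] (f.el e)) →
      ∃ c', M.IsZeroEl ((M.sqLow j)^[c'] e) := by
    intro j hj e c hc
    set e' : M.El := (M.sqLow j)^[c] e with he'
    have hfe' : f.f e'.1 e'.2 = 0 := by
      have : f.el e' = (N.sqLow j)^[c] (f.el e) := f.el_sqLow_iter j c e
      unfold USM.IsZeroEl at hc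
      rw [← this] at hc
      exact hc
    obtain ⟨w, hw⟩ := (hexact e'.1 e'.2).mp hfe'
    obtain ⟨c', hc'⟩ := hK ⟨e'.1, w⟩ j hj
    refine ⟨c' + c, ?_⟩
    rw [Function.iterate_add_apply, ← he']
    have heq : e' = g.el ⟨e'.1, w⟩ := by
      show e' = ⟨e'.1, g.f e'.1 w⟩
      rw [hw]
      exact (Sigma.eta e').symm
    rw [heq]
    exact (g.el_sqLow_iter j c' ⟨e'.1, w⟩) ▸ g.el_zero hc'
  constructor
  · intro n x _hM hN j hj
    obtain ⟨c, hc⟩ := hN j hj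
    exact key j (by omega) ⟨n, x⟩ c hc
  · intro n y hy
    obtain ⟨x, hx⟩ := hf_surj n y
    refine ⟨x, ?_, ?_⟩
    · intro j hj
      obtain ⟨c, hc⟩ := hy j hj
      have : f.el ⟨n, x⟩ = ⟨n, y⟩ := by
        show (⟨n, f.f n x⟩ : N.El) = ⟨n, y⟩
        rw [hx]
      refine key j (by omega) ⟨n, x⟩ c ?_
      rw [this]
      exact hc
    · rw [hx, sub_self]
      intro j hj
      exact ⟨0, rfl⟩
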